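/- Let n ≥ 1, let F and G be n×n real matrices with F invertible, suppose F·𝟏 = −G·𝟏 (where 𝟏 is the all-ones column vector), and let t ≥ 0. Set Λ = exp(t·F) and Ψ = (I − Λ)·(−F)⁻¹. Then (Ψ·G + Λ)·𝟏 = 𝟏. -/

import Mathlib

attribute [local instance]
  Matrix.linftyOpNormedAddCommGroup
  Matrix.linftyOpNormedRing
  Matrix.linftyOpNormedAlgebra

open Matrix NormedSpace

/-- Stochasticity of the block rows of `P^{DTMC}`: if `F·𝟏 = −G·𝟏` and `F` is invertible
then, with `Λ = e^{tF}` and `Ψ = (I − Λ)(−F)⁻¹`, one has `(Ψ G + Λ)·𝟏 = 𝟏`. -/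
theorem block_row_stochastic (n : ℕ) (hn : 1 ≤ n)
    (F G : Matrix (Fin n) (Fin n) ℝ) (hF : IsUnit F)
    (hFG : F *ᵥ (1 : Fin n → ℝ) = -(G *ᵥ (1 : Fin n → ℝ)))
    (t : ℝ) (ht : 0 ≤ t)
    (Λ Ψ : Matrix (Fin n) (Fin n) ℝ)
    (hΛ : Λ = exp (t • F)) (hΨ : Ψ = (1 - Λ) * (-F)⁻¹) :
    (Ψ * G + Λ) *ᵥ (1 : Fin n → ℝ) = 1 := by
  have hG1 : G *ᵥ (1 : Fin n → ℝ) = (-F) *ᵥ (1 : Fin n → ℝ) := by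
    rw [neg_mulVec]
    rw [hFG, neg_neg]
  have hdet : IsUnit (-F).det := (Matrix.isUnit_iff_isUnit_det _).mp hF.neg
  have hinv : (-F)⁻¹ * (-F) = 1 := Matrix.nonsing_inv_mul _ hdet
  calc (Ψ * G + Λ) *ᵥ (1 : Fin n → ℝ)
      = (Ψ * G) *ᵥ 1 + Λ *ᵥ 1 := Matrix.add_mulVec _ _ _
    _ = Ψ *ᵥ (G *ᵥ 1) + Λ *ᵥ 1 := by rw [Matrix.mulVec_mulVec]
    _ = ((1 - Λ) * ((-F)⁻¹ * (-F))) *ᵥ 1 + Λ *ᵥ 1 := by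
        rw [hG1, hΨ, Matrix.mulVec_mulVec, mul_assoc]
    _ = (1 - Λ) *ᵥ 1 + Λ *ᵥ 1 := by rw [hinv, mul_one]
    _ = 1 := by rw [Matrix.sub_mulVec, Matrix.one_mulVec]; abel
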